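/- There is a bijection between the set of equivalence classes of irreducible representations of a finite n-ary group (G,f) and the set of equivalence classes of irreducible representations of its Post cover G*_a, given by Λ ↦ Λ*. In particular, a finite n-ary group has only finitely many irreducible representations up to equivalence. -/

import Mathlib

/-- An `n`-ary (polyadic) group: a set `G` with an `n`-ary operation `f`
(encoded on lists; only values on lists of length `n` are relevant) which is
associative and uniquely solvable in every position. -/
structure PolyadicGroup (n : ℕ) (G : Type*) where
  f : List G → G
  assoc : ∀ u v w u' v' w' : List G,
    v.length = n → v'.length = n →
    u.length + w.length = n - 1 → u'.length + w'.length = n - 1 →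
    u ++ v ++ w = u' ++ v' ++ w' →
    f (u ++ f v :: w) = f (u' ++ f v' :: w')
  solv : ∀ (u w : List G) (b : G), u.length + w.length = n - 1 →
    ∃! z : G, f (u ++ z :: w) = b

/-- The skew element `x̄` of `x`: the unique `z` with `f(x,...,x,z) = x`
(`x` repeated `n-1` times). -/
noncomputable def PolyadicGroup.skew {n : ℕ} {G : Type*} (P : PolyadicGroup n G)
    (x : G) : G :=
  (P.solv (List.replicate (n - 1) x) [] x (by simp)).choose

/-- `f_*`: apply `f` once (length `n`) or twice (length `2n-1`). -/
def PolyadicGroup.fstar {n : ℕ} {G : Type*} (P : PolyadicGroup n G)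
    (l : List G) : G :=
  if l.length = n then P.f l else P.f (P.f (l.take n) :: l.drop n)

/-- The Post cover multiplication on `G × ℤ_{n-1}`:
`(x,i)·(y,j) = (f_*(x, a^(i), y, a^(j), ā, a^(n-2-i*j)), i*j)` with
`i*j ≡ i+j+1 (mod n-1)`. -/
noncomputable def postMul {n : ℕ} {G : Type*} (P : PolyadicGroup n G) (a : G)
    (p q : G × ZMod (n - 1)) : G × ZMod (n - 1) :=
  (P.fstar (p.1 :: (List.replicate p.2.val a ++ q.1 ::
      (List.replicate q.2.val a ++ P.skew a ::
        List.replicate (n - 2 - (p.2 + q.2 + 1).val) a))),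
    p.2 + q.2 + 1)

/-- A degree-`m` representation of the n-ary group `(G, f)`:
`Λ(f(x_1,...,x_n)) = Λ(x_1)⋯Λ(x_n)`. -/
def IsNaryRep {n : ℕ} {G : Type*} (P : PolyadicGroup n G) {m : ℕ}
    (Λ : G → Matrix.GeneralLinearGroup (Fin m) ℂ) : Prop :=
  ∀ l : List G, l.length = n → Λ (P.f l) = (l.map Λ).prod

/-- A set of invertible matrices acts irreducibly on `ℂ^m`:
no invariant subspace other than `⊥` and `⊤`. -/
def IsIrredSet {m : ℕ} (T : Set (Matrix.GeneralLinearGroup (Fin m) ℂ)) : Prop :=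
  ∀ W : Submodule ℂ (Fin m → ℂ),
    (∀ g ∈ T, ∀ v ∈ W, Matrix.mulVec (g : Matrix (Fin m) (Fin m) ℂ) v ∈ W) →
    W = ⊥ ∨ W = ⊤

/-- `Λ* : G*_a → GL_m(ℂ)`, `Λ*(x,i) = Λ(x)Λ(a)^i`. -/
noncomputable def starRep (n : ℕ) {G : Type*} {m : ℕ} (a : G)
    (Λ : G → Matrix.GeneralLinearGroup (Fin m) ℂ) :
    G × ZMod (n - 1) → Matrix.GeneralLinearGroup (Fin m) ℂ :=
  fun p => Λ p.1 * (Λ a) ^ p.2.val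

/-- Equivalence of (possibly different-degree) representations: conjugacy by
a fixed invertible matrix. -/
def RepEquiv {X : Type*}
    (Λ Λ' : Σ m : ℕ, X → Matrix.GeneralLinearGroup (Fin m) ℂ) : Prop :=
  ∃ h : Λ'.1 = Λ.1, ∃ T : Matrix.GeneralLinearGroup (Fin Λ.1) ℂ,
    ∀ x : X, (h ▸ Λ'.2) x = T * Λ.2 x * T⁻¹

section Polyadic
variable {n : ℕ} {G : Type*} (P : PolyadicGroup n G)

lemma PolyadicGroup.cancel {u w : List G} {z z' : G} (h : u.length + w.length = n - 1)
    (he : P.f (u ++ z :: w) = P.f (u ++ z' :: w)) : z = z' := by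
  obtain ⟨y, -, hy⟩ := P.solv u w (P.f (u ++ z' :: w)) h
  exact (hy z he).trans (hy z' rfl).symm

lemma PolyadicGroup.skew_spec (a : G) :
    P.f (List.replicate (n - 1) a ++ [P.skew a]) = a :=
  (P.solv (List.replicate (n - 1) a) [] a (by simp)).choose_spec.1

lemma rep_swap {α : Type*} (x : α) (k l : ℕ) (t : List α) :
    List.replicate k x ++ (List.replicate l x ++ t) = List.replicate l x ++ (List.replicate k x ++ t) := by
  rw [← List.append_assoc, ← List.append_assoc, ← List.replicate_add, ← List.replicate_add,
    Nat.add_comm]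

lemma rep_cons_rep {α : Type*} (x : α) (k l m : ℕ) (h : k + l + 1 = m) :
    List.replicate k x ++ x :: List.replicate l x = List.replicate m x := by
  rw [show m = k + (l+1) by omega, List.replicate_add, List.replicate_succ]

lemma PolyadicGroup.claimA (hn : 2 ≤ n) (a : G) {i : ℕ} (hi : i ≤ n - 1) :
    P.f (List.replicate i a ++ P.skew a :: List.replicate (n - 1 - i) a) = a := by
  apply P.cancel (u := List.replicate (n-1) a) (w := ([] : List G)) (by simp)
  have h1 := P.assoc (List.replicate (n-1) a)
      (List.replicate i a ++ P.skew a :: List.replicate (n-1-i) a) []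
      (List.replicate i a) (List.replicate (n-1) a ++ [P.skew a]) (List.replicate (n-1-i) a)
      (by simp; omega) (by simp; omega) (by simp) (by simp; omega)
      (by simp only [List.append_nil, List.append_assoc, List.cons_append, List.nil_append]
          exact rep_swap a (n-1) i _)
  rw [h1, P.skew_spec]
  have e1 : List.replicate i a ++ a :: List.replicate (n-1-i) a = List.replicate n a :=
    rep_cons_rep a i (n-1-i) n (by omega)
  have e2 : List.replicate (n-1) a ++ a :: ([] : List G) = List.replicate n a := by
    simpa using rep_cons_rep a (n-1) 0 n (by omega)
  rw [e1, e2]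

end Polyadic


section Polyadic2
variable {n : ℕ} {G : Type*} (P : PolyadicGroup n G)

lemma PolyadicGroup.d1 (hn : 2 ≤ n) (a : G) {i : ℕ} (hi : i ≤ n - 2) (x : G) :
    P.f (x :: (List.replicate i a ++ P.skew a :: List.replicate (n - 2 - i) a)) = x := by
  refine P.cancel (u := ([] : List G)) (w := List.replicate (n-1) a) (by simp) ?_
  simp only [List.nil_append]
  have h1 := P.assoc [] (x :: (List.replicate i a ++ P.skew a :: List.replicate (n-2-i) a))
      (List.replicate (n-1) a)
      [x] (List.replicate i a ++ P.skew a :: List.replicate (n-1-i) a) (List.replicate (n-2) a)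
      (by simp; omega) (by simp; omega) (by simp) (by simp; omega)
      (by simp only [List.nil_append, List.cons_append, List.append_assoc]
          congr 3
          rw [← List.replicate_add, ← List.replicate_add,
            show n-2-i + (n-1) = (n-1-i) + (n-2) from by omega])
  simp only [List.nil_append] at h1
  rw [h1, P.claimA hn a (by omega)]
  congr 1
  simp only [List.singleton_append]
  congr 1
  rw [← List.replicate_succ]
  congr 1
  omega

lemma PolyadicGroup.d2 (hn : 2 ≤ n) (a : G) {i : ℕ} (hi : i ≤ n - 2) (x : G) :
    P.f ((List.replicate i a ++ P.skew a :: List.replicate (n - 2 - i) a) ++ [x]) = x := by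
  refine P.cancel (u := List.replicate (n-1) a) (w := ([] : List G)) (by simp) ?_
  have h1 := P.assoc (List.replicate (n-1) a)
      ((List.replicate i a ++ P.skew a :: List.replicate (n-2-i) a) ++ [x]) []
      (List.replicate i a) (List.replicate (n-1) a ++ [P.skew a])
      (List.replicate (n-2-i) a ++ [x])
      (by simp; omega) (by simp; omega) (by simp) (by simp; omega)
      (by simp only [List.append_nil, List.append_assoc, List.cons_append, List.nil_append]
          exact rep_swap a (n-1) i _)
  rw [h1, P.skew_spec]
  congr 1
  simp only [← List.cons_append, ← List.append_assoc]
  rw [rep_cons_rep a i (n-2-i) (n-1) (by omega)]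
end Polyadic2

section Star
variable {n : ℕ} {G : Type*} (P : PolyadicGroup n G)

lemma PolyadicGroup.fstar_n {l : List G} (h : l.length = n) : P.fstar l = P.f l := if_pos h

lemma PolyadicGroup.fstar_2n (hn : 2 ≤ n) {l : List G} (h : l.length = 2*n-1) :
    P.fstar l = P.f (P.f (l.take n) :: l.drop n) := if_neg (by omega)

lemma kcases (hn : 2 ≤ n) (i j : ZMod (n-1)) :
    (i + j + 1).val = i.val + j.val + 1 ∨ (i + j + 1).val + (n-1) = i.val + j.val + 1 := by
  haveI : NeZero (n-1) := ⟨by omega⟩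
  have hi := ZMod.val_lt i
  have hj := ZMod.val_lt j
  have h1 : (i + j + 1).val = (i.val + j.val + 1) % (n-1) := by
    rw [ZMod.val_add, ZMod.val_add, ZMod.val_one_eq_one_mod, ← Nat.add_mod]
  rcases Nat.lt_or_ge (i.val + j.val + 1) (n-1) with h | h
  · left; rw [h1, Nat.mod_eq_of_lt h]
  · right
    rw [h1, Nat.mod_eq_sub_mod h, Nat.mod_eq_of_lt (by omega)]
    omega

variable {m : ℕ} {Λ : G → Matrix.GeneralLinearGroup (Fin m) ℂ}

lemma fstar_rep (hΛ : IsNaryRep P Λ) (hn : 2 ≤ n) {l : List G} (h : l.length = n ∨ l.length = 2*n-1) :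
    Λ (P.fstar l) = (l.map Λ).prod := by
  rcases h with h | h
  · rw [P.fstar_n h]; exact hΛ l h
  · rw [P.fstar_2n hn h]
    have ht : (l.take n).length = n := by simp; omega
    rw [hΛ _ (by simp; omega), List.map_cons, List.prod_cons, hΛ _ ht,
      ← List.prod_append, ← List.map_append, List.take_append_drop]

lemma skew_rep (hΛ : IsNaryRep P Λ) (hn : 2 ≤ n) (a : G) :
    Λ (P.skew a) * (Λ a) ^ (n - 2) = 1 := by
  have e : (Λ a) ^ (n-1) * Λ (P.skew a) = Λ a := by
    have := hΛ (List.replicate (n-1) a ++ [P.skew a]) (by simp; omega)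
    rw [P.skew_spec] at this
    have hp : (List.map Λ (List.replicate (n-1) a ++ [P.skew a])).prod
        = (Λ a) ^ (n-1) * Λ (P.skew a) := by
      simp [List.map_append, List.prod_append, List.map_replicate, List.prod_replicate]
    rw [← hp]
    exact this.symm
  have hsk : Λ (P.skew a) = ((Λ a) ^ (n-1))⁻¹ * Λ a := eq_inv_mul_iff_mul_eq.2 e
  have hA : Λ a * (Λ a) ^ (n-2) = (Λ a) ^ (n-1) := by
    rw [← pow_succ']; congr 1; omega
  rw [hsk, mul_assoc, hA, inv_mul_cancel]

lemma star_mul (hΛ : IsNaryRep P Λ) (hn : 2 ≤ n) (a : G) (p q : G × ZMod (n-1)) :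
    starRep n a Λ (postMul P a p q) = starRep n a Λ p * starRep n a Λ q := by
  haveI : NeZero (n-1) := ⟨by omega⟩
  have hk := ZMod.val_lt (p.2 + q.2 + 1)
  have hi := ZMod.val_lt p.2
  have hj := ZMod.val_lt q.2
  show Λ (P.fstar _) * (Λ a) ^ (p.2 + q.2 + 1).val = _
  rw [fstar_rep P hΛ hn (by
    rcases kcases hn p.2 q.2 with h | h
    · left; simp; omega
    · right; simp; omega)]
  simp only [List.map_cons, List.map_append, List.prod_cons, List.prod_append,
    List.map_replicate, List.prod_replicate, starRep]
  simp only [mul_assoc]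
  rw [← pow_add (Λ a) (n - 2 - (p.2 + q.2 + 1).val) ((p.2 + q.2 + 1).val),
    show n - 2 - (p.2 + q.2 + 1).val + (p.2 + q.2 + 1).val = n - 2 from by omega,
    skew_rep P hΛ hn a, mul_one]

end Star


section Surj
variable {n : ℕ} {G : Type*} (P : PolyadicGroup n G)

lemma fstar_split (hn : 2 ≤ n) (u v : List G) (hu : u.length = n) (hv : v.length = n-1) :
    P.fstar (u ++ v) = P.f (P.f u :: v) := by
  rw [P.fstar_2n hn (by simp [hu, hv]; omega), List.take_left' hu, List.drop_left' hu]

lemma shift (hn : 2 ≤ n) (a x : G) (i : ZMod (n-1)) (h : i.val + 1 ≤ n - 2) :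
    postMul P a (x, i) (a, 0) = (x, i + 1) := by
  haveI : NeZero (n-1) := ⟨by omega⟩
  have h0 : (0 : ZMod (n-1)).val = 0 := ZMod.val_zero
  have hcast : (i + 0 + 1 : ZMod (n-1)) = i + 1 := by ring
  have hk : ((i + 0 + 1 : ZMod (n-1))).val = i.val + 1 := by
    rcases kcases hn i 0 with hc | hc <;> rw [h0] at hc <;> omega
  have hk1 : ((i + 1 : ZMod (n-1))).val = i.val + 1 := by rw [← hcast]; exact hk
  unfold postMul
  simp only [hk, hk1, h0, List.replicate_zero, List.nil_append, hcast]
  have hlist : (x :: (List.replicate i.val a ++ a :: (P.skew a :: List.replicate (n - 2 - (i.val + 1)) a)))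
      = x :: (List.replicate (i.val+1) a ++ P.skew a :: List.replicate (n - 2 - (i.val+1)) a) := by
    rw [List.append_cons, ← List.replicate_succ']
  rw [hlist, P.fstar_n (by simp; omega), P.d1 hn a (by omega) x]

lemma prod_formula (hn : 2 ≤ n) (a x : G) (t : List G) (ht : t.length ≤ n - 2) :
    List.foldl (fun p y => postMul P a p (y, (0 : ZMod (n-1)))) (x, (0 : ZMod (n-1))) t
          = (P.f ((x :: t) ++ P.skew a :: List.replicate (n - 2 - t.length) a),
            (t.length : ZMod (n-1))) := by
  haveI : NeZero (n-1) := ⟨by omega⟩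
  induction t using List.reverseRecOn with
  | nil =>
    have hd := P.d1 hn a (i := 0) (by omega) x
    simp only [List.replicate_zero, List.nil_append, Nat.sub_zero] at hd
    simp only [List.foldl_nil, List.length_nil, Nat.sub_zero, Nat.cast_zero, List.cons_append,
      List.nil_append, hd]
  | append_singleton l y IH =>
    have hl : l.length ≤ n - 2 := by simp at ht ⊢; omega
    have hlt : l.length + 1 ≤ n - 2 := by simpa using ht
    rw [List.foldl_append, IH hl, List.foldl_cons, List.foldl_nil]
    set tl := l.length with htl
    have hvtl : ((tl : ZMod (n-1))).val = tl := ZMod.val_natCast_of_lt (by omega)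
    have h0 : (0 : ZMod (n-1)).val = 0 := ZMod.val_zero
    have hcast : ((tl : ZMod (n-1)) + 0 + 1) = ((tl + 1 : ℕ) : ZMod (n-1)) := by push_cast; ring
    have hk2 : (((tl+1 : ℕ) : ZMod (n-1))).val = tl + 1 := ZMod.val_natCast_of_lt (by omega)
    have hk : ((tl : ZMod (n-1)) + 0 + 1).val = tl + 1 := by rw [hcast, hk2]
    unfold postMul
    simp only [hk, hk2, h0, hvtl, List.replicate_zero, List.nil_append, hcast, List.length_append,
      List.length_cons, List.length_nil, Nat.zero_add]
    rw [Prod.mk.injEq]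
    refine ⟨?_, rfl⟩
    rw [P.fstar_n (by simp; omega)]
    have hassoc := P.assoc [] (x :: l ++ P.skew a :: List.replicate (n-2-tl) a)
        (List.replicate tl a ++ y :: P.skew a :: List.replicate (n - 2 - (tl+1)) a)
        (x :: l) (P.skew a :: (List.replicate (n-2) a ++ [y]))
        (P.skew a :: List.replicate (n - 2 - (tl+1)) a)
        (by simp; omega) (by simp; omega) (by simp; omega) (by simp; omega)
        (by simp only [List.nil_append, List.append_assoc, List.cons_append]
            congr 3
            rw [← List.append_assoc, ← List.replicate_add,
              show n-2-tl + tl = n-2 from by omega])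
    simp only [List.nil_append] at hassoc
    have hd2 := P.d2 hn a (i := 0) (by omega) y
    simp only [List.replicate_zero, List.nil_append, Nat.sub_zero, List.cons_append] at hd2
    rw [hassoc, hd2]
    congr 1
    simp [htl]

lemma prod_full (hn : 2 ≤ n) (a x : G) (t : List G) (y : G) (htl : t.length = n - 2) :
    List.foldl (fun p y => postMul P a p (y, (0 : ZMod (n-1)))) (x, (0 : ZMod (n-1))) (t ++ [y])
          = (P.f (x :: (t ++ [y])), 0) := by
  haveI : NeZero (n-1) := ⟨by omega⟩
  rw [List.foldl_append, prod_formula P hn a x t (by omega), List.foldl_cons, List.foldl_nil]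
  rw [htl, Nat.sub_self, List.replicate_zero]
  have hvtl : (((n-2 : ℕ) : ZMod (n-1))).val = n-2 := ZMod.val_natCast_of_lt (by omega)
  have h0 : (0 : ZMod (n-1)).val = 0 := ZMod.val_zero
  have hcast : (((n-2:ℕ) : ZMod (n-1)) + 0 + 1) = 0 := by
    rw [add_zero, show ((n-2:ℕ) : ZMod (n-1)) + 1 = ((n-2+1 : ℕ) : ZMod (n-1)) from by push_cast; ring,
      show n-2+1 = n-1 from by omega, ZMod.natCast_self]
  unfold postMul
  simp only [hvtl, h0, hcast, List.replicate_zero, List.nil_append, Nat.sub_zero]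
  rw [Prod.mk.injEq]
  refine ⟨?_, rfl⟩
  have hsplit : (P.f (x :: t ++ [P.skew a]) :: (List.replicate (n-2) a ++ y ::
        P.skew a :: List.replicate (n-2) a))
      = (P.f (x :: t ++ [P.skew a]) :: (List.replicate (n-2) a ++ [y])) ++
        (P.skew a :: List.replicate (n-2) a) := by simp
  rw [hsplit, fstar_split P hn _ _ (by simp; omega) (by simp; omega)]
  have hassoc := P.assoc [] (x :: t ++ [P.skew a]) (List.replicate (n-2) a ++ [y])
      (x :: t) (P.skew a :: (List.replicate (n-2) a ++ [y])) []
      (by simp; omega) (by simp; omega) (by simp; omega) (by simp; omega)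
      (by simp)
  simp only [List.nil_append, List.append_nil] at hassoc
  have hd2 := P.d2 hn a (i := 0) (by omega) y
  simp only [List.replicate_zero, List.nil_append, Nat.sub_zero, List.cons_append] at hd2
  rw [show (P.f (x :: t ++ [P.skew a]) :: (List.replicate (n-2) a ++ [y]))
      = P.f (x :: t ++ [P.skew a]) :: (List.replicate (n-2) a ++ [y]) from rfl]
  rw [hassoc, hd2]
  have hd1 := P.d1 hn a (i := 0) (by omega) (P.f (x :: t ++ [y]))
  simp only [List.replicate_zero, List.nil_append, Nat.sub_zero] at hd1
  rw [show x :: t ++ y :: ([] : List G) = x :: (t ++ [y]) from by simp] at hd1 ⊢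
  exact hd1

end Surj


section RepEquivLemmas
variable {X : Type*}

lemma RepEquiv.refl (Λ : Σ m : ℕ, X → Matrix.GeneralLinearGroup (Fin m) ℂ) :
    RepEquiv Λ Λ := ⟨rfl, 1, fun x => by simp⟩

lemma RepEquiv.symm {Λ Λ' : Σ m : ℕ, X → Matrix.GeneralLinearGroup (Fin m) ℂ}
    (h : RepEquiv Λ Λ') : RepEquiv Λ' Λ := by
  obtain ⟨m, f⟩ := Λ
  obtain ⟨m', f'⟩ := Λ'
  obtain ⟨hm, T, hT⟩ := h
  cases hm
  refine ⟨rfl, T⁻¹, fun x => ?_⟩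
  have h1 : f' x = T * f x * T⁻¹ := hT x
  show f x = T⁻¹ * f' x * T⁻¹⁻¹
  rw [h1]; group

lemma RepEquiv.trans {Λ Λ' Λ'' : Σ m : ℕ, X → Matrix.GeneralLinearGroup (Fin m) ℂ}
    (h : RepEquiv Λ Λ') (h' : RepEquiv Λ' Λ'') : RepEquiv Λ Λ'' := by
  obtain ⟨m, f⟩ := Λ
  obtain ⟨m', f'⟩ := Λ'
  obtain ⟨m'', f''⟩ := Λ''
  obtain ⟨hm, T, hT⟩ := h
  cases hm
  obtain ⟨hm', T', hT'⟩ := h'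
  cases hm'
  refine ⟨rfl, T' * T, fun x => ?_⟩
  have h1 : f' x = T * f x * T⁻¹ := hT x
  have h2 : f'' x = T' * f' x * T'⁻¹ := hT' x
  show f'' x = (T' * T) * f x * (T' * T)⁻¹
  rw [h2, h1]; group

end RepEquivLemmas

section StarFacts
variable {n : ℕ} {G : Type*} (P : PolyadicGroup n G) (a : G) {m : ℕ}

lemma conj_pow' {M : Type*} [Group M] (T x : M) (k : ℕ) :
    (T * x * T⁻¹) ^ k = T * x ^ k * T⁻¹ := by
  rw [← MulAut.conj_apply, ← map_pow, MulAut.conj_apply]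

lemma star_at_zero (hn : 2 ≤ n) (Λ : G → Matrix.GeneralLinearGroup (Fin m) ℂ) (x : G) :
    starRep n a Λ (x, 0) = Λ x := by
  unfold starRep
  simp [ZMod.val_zero]

lemma repEquiv_star (hn : 2 ≤ n)
    {Λ Λ' : Σ m : ℕ, G → Matrix.GeneralLinearGroup (Fin m) ℂ} (h : RepEquiv Λ Λ') :
    RepEquiv ⟨Λ.1, starRep n a Λ.2⟩ ⟨Λ'.1, starRep n a Λ'.2⟩ := by
  obtain ⟨m, f⟩ := Λ
  obtain ⟨m', f'⟩ := Λ'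
  obtain ⟨hm, T, hT⟩ := h
  cases hm
  refine ⟨rfl, T, fun p => ?_⟩
  have h1 : f' p.1 = T * f p.1 * T⁻¹ := hT p.1
  have h2 : f' a = T * f a * T⁻¹ := hT a
  show f' p.1 * (f' a) ^ (p.2.val) = T * (f p.1 * (f a) ^ p.2.val) * T⁻¹
  rw [h1, h2, conj_pow']
  group

lemma repEquiv_of_star (hn : 2 ≤ n)
    {Λ Λ' : Σ m : ℕ, G → Matrix.GeneralLinearGroup (Fin m) ℂ}
    (h : RepEquiv ⟨Λ.1, starRep n a Λ.2⟩ ⟨Λ'.1, starRep n a Λ'.2⟩) : RepEquiv Λ Λ' := by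
  obtain ⟨m, f⟩ := Λ
  obtain ⟨m', f'⟩ := Λ'
  obtain ⟨hm, T, hT⟩ := h
  cases hm
  refine ⟨rfl, T, fun x => ?_⟩
  have h1 : starRep n a f' (x, 0) = T * starRep n a f (x, 0) * T⁻¹ := hT (x, 0)
  rw [star_at_zero a hn, star_at_zero a hn] at h1
  exact h1

lemma irred_star (hn : 2 ≤ n) {Λ : G → Matrix.GeneralLinearGroup (Fin m) ℂ}
    (hirr : IsIrredSet (Set.range Λ)) : IsIrredSet (Set.range (starRep n a Λ)) := by
  intro W hW
  refine hirr W ?_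
  rintro g ⟨x, rfl⟩ v hv
  have := hW (starRep n a Λ (x, 0)) ⟨(x, 0), rfl⟩ v hv
  rwa [star_at_zero a hn] at this

lemma pow_invariant {Λ : G → Matrix.GeneralLinearGroup (Fin m) ℂ}
    (W : Submodule ℂ (Fin m → ℂ))
    (hW : ∀ g ∈ Set.range Λ, ∀ v ∈ W, Matrix.mulVec (g : Matrix (Fin m) (Fin m) ℂ) v ∈ W)
    (x : G) (k : ℕ) :
    ∀ v ∈ W, Matrix.mulVec ((Λ x * (Λ a) ^ k : Matrix.GeneralLinearGroup (Fin m) ℂ) :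
      Matrix (Fin m) (Fin m) ℂ) v ∈ W := by
  have hpow : ∀ (j : ℕ), ∀ v ∈ W, Matrix.mulVec (((Λ a) ^ j : Matrix.GeneralLinearGroup (Fin m) ℂ) :
      Matrix (Fin m) (Fin m) ℂ) v ∈ W := by
    intro j
    induction j with
    | zero => intro v hv; simpa using hv
    | succ j IH =>
      intro v hv
      have : ((Λ a) ^ (j+1) : Matrix.GeneralLinearGroup (Fin m) ℂ) = Λ a * (Λ a) ^ j := by
        rw [pow_succ']
      rw [this, Units.val_mul, ← Matrix.mulVec_mulVec]
      exact hW (Λ a) ⟨a, rfl⟩ _ (IH v hv)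
  intro v hv
  rw [Units.val_mul, ← Matrix.mulVec_mulVec]
  exact hW (Λ x) ⟨x, rfl⟩ _ (hpow k v hv)

end StarFacts

section PostToNary
variable {n : ℕ} {G : Type*} (P : PolyadicGroup n G) (a : G) {m : ℕ}
variable {Γ : G × ZMod (n-1) → Matrix.GeneralLinearGroup (Fin m) ℂ}

lemma gamma_foldl (hΓ : ∀ p q, Γ (postMul P a p q) = Γ p * Γ q) :
    ∀ (t : List G) (p : G × ZMod (n-1)),
      Γ (List.foldl (fun p y => postMul P a p (y, (0:ZMod (n-1)))) p t)
        = Γ p * (t.map (fun y => Γ (y, 0))).prod := by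
  intro t
  induction t with
  | nil => intro p; simp
  | cons y t IH =>
    intro p
    rw [List.foldl_cons, IH, hΓ]
    simp [mul_assoc]

lemma gamma_shift (hn : 2 ≤ n) (hΓ : ∀ p q, Γ (postMul P a p q) = Γ p * Γ q) :
    ∀ j, j ≤ n - 2 → ∀ x, Γ (x, (j : ZMod (n-1))) = Γ (x, 0) * (Γ (a, 0)) ^ j := by
  haveI : NeZero (n-1) := ⟨by omega⟩
  intro j
  induction j with
  | zero => intro _ x; simp
  | succ j IH =>
    intro hj x
    have hv : ((j : ZMod (n-1))).val = j := ZMod.val_natCast_of_lt (by omega)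
    have hs := shift P hn a x (j : ZMod (n-1)) (by rw [hv]; omega)
    have hmul := hΓ (x, (j : ZMod (n-1))) (a, 0)
    rw [hs] at hmul
    have hc : ((j : ZMod (n-1)) + 1) = ((j+1 : ℕ) : ZMod (n-1)) := by push_cast; ring
    rw [hc] at hmul
    rw [hmul, IH (by omega) x, pow_succ, mul_assoc]

lemma post_to_nary (hn : 2 ≤ n) (hΓ : ∀ p q, Γ (postMul P a p q) = Γ p * Γ q) :
    IsNaryRep P (fun x => Γ (x, 0)) ∧ starRep n a (fun x => Γ (x, 0)) = Γ := by
  haveI : NeZero (n-1) := ⟨by omega⟩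
  constructor
  · intro l hl
    obtain ⟨x, r, rfl⟩ : ∃ x r, l = x :: r := by
      cases l with
      | nil => simp at hl; omega
      | cons x r => exact ⟨x, r, rfl⟩
    have hr : r ≠ [] := by
      intro h
      subst h
      simp at hl
      omega
    obtain ⟨t, y, rfl⟩ := (r.eq_nil_or_concat').resolve_left hr
    have hfull := prod_full P hn a x t y (by simp at hl ⊢; omega)
    have hGf := congrArg Γ hfull
    rw [gamma_foldl P a hΓ] at hGf
    show Γ (P.f (x :: (t ++ [y])), 0) = _
    rw [← hGf]
    simp [List.map_cons, List.prod_cons]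
  · funext p
    obtain ⟨x, i⟩ := p
    show Γ (x, 0) * (Γ (a, 0)) ^ i.val = Γ (x, i)
    rw [← gamma_shift P a hn hΓ i.val (by have := ZMod.val_lt i; omega) x,
      ZMod.natCast_zmod_val]

end PostToNary

section Cancel
variable {n : ℕ} {G : Type*} (P : PolyadicGroup n G)

lemma fstar_cancel (hn : 2 ≤ n) (u w : List G) (z z' : G) (hu : u.length ≤ n - 1)
    (hlen : u.length + w.length + 1 = n ∨ u.length + w.length + 1 = 2*n-1)
    (h : P.fstar (u ++ z :: w) = P.fstar (u ++ z' :: w)) : z = z' := by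
  rcases hlen with hl | hl
  · rw [P.fstar_n (by simp; omega), P.fstar_n (by simp; omega)] at h
    exact P.cancel (by omega) h
  · have hw : n - 1 - u.length ≤ w.length := by omega
    have hsplit : ∀ c : G, u ++ c :: w
        = (u ++ c :: w.take (n - 1 - u.length)) ++ w.drop (n - 1 - u.length) := by
      intro c
      conv_lhs => rw [← List.take_append_drop (n - 1 - u.length) w]
      simp
    rw [hsplit z, hsplit z',
      fstar_split P hn _ _ (by simp; omega) (by simp; omega),
      fstar_split P hn _ _ (by simp; omega) (by simp; omega)] at h
    have houter := P.cancel (u := []) (w := w.drop (n - 1 - u.length))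
      (by simp; omega) h
    exact P.cancel (u := u) (w := w.take (n - 1 - u.length)) (by simp; omega) houter

lemma postMul_left_bijective (hn : 2 ≤ n) [Finite G] (a : G) (q : G × ZMod (n-1)) :
    Function.Bijective (fun p => postMul P a q p) := by
  haveI : NeZero (n-1) := ⟨by omega⟩
  rw [← Finite.injective_iff_bijective]
  intro p p' h
  have h2 : q.2 + p.2 + 1 = q.2 + p'.2 + 1 := congrArg Prod.snd h
  have hp2 : p.2 = p'.2 := by
    have := add_right_cancel h2
    exact add_left_cancel this
  have h1 := congrArg Prod.fst h
  unfold postMul at h1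
  dsimp only at h1
  rw [hp2] at h1
  have hqv := ZMod.val_lt q.2
  have hpv := ZMod.val_lt p'.2
  have hkv := ZMod.val_lt (q.2 + p'.2 + 1)
  have hfc := fstar_cancel P hn (q.1 :: List.replicate q.2.val a)
      (List.replicate p'.2.val a ++ P.skew a ::
        List.replicate (n - 2 - (q.2 + p'.2 + 1).val) a) p.1 p'.1
      (by simp; omega)
      (by rcases kcases hn q.2 p'.2 with hc | hc
          · left; simp; omega
          · right; simp; omega)
      (by simpa using h1)
  exact Prod.ext hfc hp2

end Cancel


section Schur
variable {n : ℕ} {G : Type*}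

lemma sandwich_entry {m₁ m₂ : ℕ} (A : Matrix (Fin m₁) (Fin m₁) ℂ) (B : Matrix (Fin m₂) (Fin m₂) ℂ)
    (i k : Fin m₁) (j l : Fin m₂) :
    (A * Matrix.single i j (1:ℂ) * B) k l = A k i * B j l := by
  have h1 : ∀ t : Fin m₁, (Matrix.single i j (1:ℂ) * B) t l
      = if t = i then B j l else 0 := by
    intro t
    rw [Matrix.mul_apply]
    rcases eq_or_ne t i with rfl | ht
    · simp [Matrix.single]
    · simp [Matrix.single, Ne.symm ht, ht]
  rw [Matrix.mul_assoc, Matrix.mul_apply]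
  rw [Finset.sum_congr rfl (fun t _ => by rw [h1 t])]
  simp

lemma matrix_eq_zero_of_mulVec {m₁ m₂ : ℕ} {S : Matrix (Fin m₁) (Fin m₂) ℂ}
    (h : ∀ v, S.mulVec v = 0) : S = 0 := by
  ext i j
  have := congrFun (h (Pi.single j 1)) i
  simpa using this

lemma schur_dichotomy {m₁ m₂ : ℕ}
    {Γ₁ : G × ZMod (n-1) → Matrix.GeneralLinearGroup (Fin m₁) ℂ}
    {Γ₂ : G × ZMod (n-1) → Matrix.GeneralLinearGroup (Fin m₂) ℂ}
    (hirr₁ : IsIrredSet (Set.range Γ₁)) (hirr₂ : IsIrredSet (Set.range Γ₂))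
    (S : Matrix (Fin m₁) (Fin m₂) ℂ)
    (hS : ∀ p, (Γ₁ p : Matrix (Fin m₁) (Fin m₁) ℂ) * S = S * (Γ₂ p : Matrix (Fin m₂) (Fin m₂) ℂ)) :
    S = 0 ∨ RepEquiv ⟨m₁, Γ₁⟩ ⟨m₂, Γ₂⟩ := by
  by_cases hS0 : S = 0
  · exact Or.inl hS0
  right
  set f : (Fin m₂ → ℂ) →ₗ[ℂ] (Fin m₁ → ℂ) := Matrix.toLin' S with hf
  have hfap : ∀ v, f v = S.mulVec v := fun v => Matrix.toLin'_apply S v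
  have hkinv : ∀ g ∈ Set.range Γ₂, ∀ v ∈ LinearMap.ker f,
      Matrix.mulVec (g : Matrix (Fin m₂) (Fin m₂) ℂ) v ∈ LinearMap.ker f := by
    rintro g ⟨p, rfl⟩ v hv
    rw [LinearMap.mem_ker] at hv ⊢
    rw [hfap] at hv ⊢
    rw [Matrix.mulVec_mulVec, ← hS p, ← Matrix.mulVec_mulVec, hv, Matrix.mulVec_zero]
  have hker : LinearMap.ker f = ⊥ := by
    rcases hirr₂ (LinearMap.ker f) hkinv with h | h
    · exact h
    · exfalso
      apply hS0
      apply matrix_eq_zero_of_mulVec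
      intro v
      have : v ∈ LinearMap.ker f := by rw [h]; trivial
      rw [← hfap]; exact this
  have hrinv : ∀ g ∈ Set.range Γ₁, ∀ v ∈ LinearMap.range f,
      Matrix.mulVec (g : Matrix (Fin m₁) (Fin m₁) ℂ) v ∈ LinearMap.range f := by
    rintro g ⟨p, rfl⟩ v hv
    obtain ⟨u, rfl⟩ := LinearMap.mem_range.mp hv
    refine LinearMap.mem_range.mpr ⟨Matrix.mulVec (Γ₂ p : Matrix (Fin m₂) (Fin m₂) ℂ) u, ?_⟩
    rw [hfap, hfap, Matrix.mulVec_mulVec, Matrix.mulVec_mulVec, hS p]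
  have hrange : LinearMap.range f = ⊤ := by
    rcases hirr₁ (LinearMap.range f) hrinv with h | h
    · exfalso
      apply hS0
      apply matrix_eq_zero_of_mulVec
      intro v
      have hm : f v ∈ LinearMap.range f := LinearMap.mem_range_self f v
      rw [h] at hm
      rw [← hfap]
      simpa using hm
    · exact h
  have hbij : Function.Bijective f :=
    ⟨LinearMap.ker_eq_bot.mp hker, LinearMap.range_eq_top.mp hrange⟩
  set e : (Fin m₂ → ℂ) ≃ₗ[ℂ] (Fin m₁ → ℂ) := LinearEquiv.ofBijective f hbij with he
  have hm : m₂ = m₁ := by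
    have := e.finrank_eq
    rwa [Module.finrank_fin_fun, Module.finrank_fin_fun] at this
  subst hm
  set U : Matrix (Fin m₂) (Fin m₂) ℂ := LinearMap.toMatrix' (e.symm : (Fin m₂ → ℂ) →ₗ[ℂ] (Fin m₂ → ℂ)) with hU
  have hcomp1 : f ∘ₗ (e.symm : (Fin m₂ → ℂ) →ₗ[ℂ] (Fin m₂ → ℂ)) = LinearMap.id := by
    refine LinearMap.ext fun v => ?_
    show f (e.symm v) = v
    exact e.apply_symm_apply v
  have hcomp2 : (e.symm : (Fin m₂ → ℂ) →ₗ[ℂ] (Fin m₂ → ℂ)) ∘ₗ f = LinearMap.id := by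
    refine LinearMap.ext fun v => ?_
    show e.symm (f v) = v
    exact e.symm_apply_apply v
  have hSU : S * U = 1 := by
    have := congrArg LinearMap.toMatrix' hcomp1
    rwa [LinearMap.toMatrix'_comp, hf, LinearMap.toMatrix'_toLin', LinearMap.toMatrix'_id] at this
  have hUS : U * S = 1 := by
    have := congrArg LinearMap.toMatrix' hcomp2
    rwa [LinearMap.toMatrix'_comp, hf, LinearMap.toMatrix'_toLin', LinearMap.toMatrix'_id] at this
  refine ⟨rfl, (⟨S, U, hSU, hUS⟩ : Matrix.GeneralLinearGroup (Fin m₂) ℂ)⁻¹, fun p => ?_⟩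
  apply Units.ext
  show (Γ₂ p : Matrix (Fin m₂) (Fin m₂) ℂ) = U * (Γ₁ p : Matrix (Fin m₂) (Fin m₂) ℂ) * S
  rw [mul_assoc, hS p, ← mul_assoc, hUS, one_mul]

end Schur


section Averaging
variable {n : ℕ} {G : Type*} [Finite G] [Fintype G] (P : PolyadicGroup n G) (a : G)

lemma coe_inv_mul {m : ℕ} (u : Matrix.GeneralLinearGroup (Fin m) ℂ) :
    ((u⁻¹ : Matrix.GeneralLinearGroup (Fin m) ℂ) : Matrix (Fin m) (Fin m) ℂ)
      * (u : Matrix (Fin m) (Fin m) ℂ) = 1 := by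
  rw [← Units.val_mul, inv_mul_cancel, Units.val_one]

lemma coe_mul_inv {m : ℕ} (u : Matrix.GeneralLinearGroup (Fin m) ℂ) :
    (u : Matrix (Fin m) (Fin m) ℂ)
      * ((u⁻¹ : Matrix.GeneralLinearGroup (Fin m) ℂ) : Matrix (Fin m) (Fin m) ℂ) = 1 := by
  rw [← Units.val_mul, mul_inv_cancel, Units.val_one]

lemma avg_intertwine [NeZero (n-1)] (hn : 2 ≤ n) {m₁ m₂ : ℕ}
    (Γ₁ : G × ZMod (n-1) → Matrix.GeneralLinearGroup (Fin m₁) ℂ)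
    (Γ₂ : G × ZMod (n-1) → Matrix.GeneralLinearGroup (Fin m₂) ℂ)
    (hmul₁ : ∀ p q, Γ₁ (postMul P a p q) = Γ₁ p * Γ₁ q)
    (hmul₂ : ∀ p q, Γ₂ (postMul P a p q) = Γ₂ p * Γ₂ q)
    (M : Matrix (Fin m₁) (Fin m₂) ℂ) (q : G × ZMod (n-1)) :
    (Γ₁ q : Matrix (Fin m₁) (Fin m₁) ℂ)
        * (∑ p : G × ZMod (n-1), (Γ₁ p : Matrix (Fin m₁) (Fin m₁) ℂ) * M *
            (((Γ₂ p)⁻¹ : Matrix.GeneralLinearGroup (Fin m₂) ℂ) : Matrix (Fin m₂) (Fin m₂) ℂ))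
      = (∑ p : G × ZMod (n-1), (Γ₁ p : Matrix (Fin m₁) (Fin m₁) ℂ) * M *
            (((Γ₂ p)⁻¹ : Matrix.GeneralLinearGroup (Fin m₂) ℂ) : Matrix (Fin m₂) (Fin m₂) ℂ))
          * (Γ₂ q : Matrix (Fin m₂) (Fin m₂) ℂ) := by
  rw [Matrix.mul_sum, Matrix.sum_mul]
  set e : (G × ZMod (n-1)) ≃ (G × ZMod (n-1)) :=
    Equiv.ofBijective _ (postMul_left_bijective P hn a q) with he
  rw [← Equiv.sum_comp e (fun p => (Γ₁ p : Matrix (Fin m₁) (Fin m₁) ℂ) * M *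
      (((Γ₂ p)⁻¹ : Matrix.GeneralLinearGroup (Fin m₂) ℂ) : Matrix (Fin m₂) (Fin m₂) ℂ)
      * (Γ₂ q : Matrix (Fin m₂) (Fin m₂) ℂ))]
  apply Finset.sum_congr rfl
  intro p _
  have hep : e p = postMul P a q p := rfl
  have h1 : Γ₁ (e p) = Γ₁ q * Γ₁ p := by rw [hep]; exact hmul₁ q p
  have h2' : (Γ₂ (e p))⁻¹ = (Γ₂ p)⁻¹ * (Γ₂ q)⁻¹ := by rw [hep, hmul₂ q p, mul_inv_rev]
  rw [h1, h2', Units.val_mul, Units.val_mul]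
  simp only [Matrix.mul_assoc]
  rw [coe_inv_mul, mul_one]

end Averaging


section Averaging2
variable {n : ℕ} {G : Type*} [Finite G] [Fintype G] (P : PolyadicGroup n G) (a : G)

lemma avg_self [NeZero (n-1)] (hn : 2 ≤ n) {m : ℕ} (hm : m ≠ 0)
    (Γ : G × ZMod (n-1) → Matrix.GeneralLinearGroup (Fin m) ℂ)
    (hmul : ∀ p q, Γ (postMul P a p q) = Γ p * Γ q)
    (hirr : IsIrredSet (Set.range Γ))
    (M : Matrix (Fin m) (Fin m) ℂ) :
    ∑ p : G × ZMod (n-1), (Γ p : Matrix (Fin m) (Fin m) ℂ) * M *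
        (((Γ p)⁻¹ : Matrix.GeneralLinearGroup (Fin m) ℂ) : Matrix (Fin m) (Fin m) ℂ)
      = (((Fintype.card (G × ZMod (n-1)) : ℂ) * Matrix.trace M) / (m : ℂ)) •
          (1 : Matrix (Fin m) (Fin m) ℂ) := by
  set Tav : Matrix (Fin m) (Fin m) ℂ := ∑ p : G × ZMod (n-1), (Γ p : Matrix (Fin m) (Fin m) ℂ)
      * M * (((Γ p)⁻¹ : Matrix.GeneralLinearGroup (Fin m) ℂ) : Matrix (Fin m) (Fin m) ℂ)
      with hTav
  have hint : ∀ q, (Γ q : Matrix (Fin m) (Fin m) ℂ) * Tav = Tav * (Γ q : Matrix (Fin m) (Fin m) ℂ) :=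
    fun q => avg_intertwine P a hn Γ Γ hmul hmul M q
  haveI : NeZero m := ⟨hm⟩
  haveI : Nonempty (Fin m) := ⟨⟨0, Nat.pos_of_ne_zero hm⟩⟩
  obtain ⟨μ, hμ⟩ := Module.End.exists_eigenvalue (Matrix.toLin' Tav)
  obtain ⟨v, hv⟩ := hμ.exists_hasEigenvector
  set S' : Matrix (Fin m) (Fin m) ℂ := Tav - μ • (1 : Matrix (Fin m) (Fin m) ℂ) with hS'def
  have hS' : ∀ q, (Γ q : Matrix (Fin m) (Fin m) ℂ) * S' = S' * (Γ q : Matrix (Fin m) (Fin m) ℂ) := by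
    intro q
    rw [hS'def, Matrix.mul_sub, Matrix.sub_mul, hint q]
    congr 1
    rw [Matrix.mul_smul, Matrix.smul_mul, mul_one, one_mul]
  have hSv : S'.mulVec v = 0 := by
    have h1 : Tav.mulVec v = μ • v := by
      rw [← Matrix.toLin'_apply]
      exact hv.apply_eq_smul
    rw [hS'def, Matrix.sub_mulVec, h1, Matrix.smul_mulVec, Matrix.one_mulVec, sub_self]
  have hSzero : S' = 0 := by
    have hinv : ∀ g ∈ Set.range Γ, ∀ w ∈ LinearMap.ker (Matrix.toLin' S'),
        Matrix.mulVec (g : Matrix (Fin m) (Fin m) ℂ) w ∈ LinearMap.ker (Matrix.toLin' S') := by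
      rintro g ⟨p, rfl⟩ w hw
      rw [LinearMap.mem_ker, Matrix.toLin'_apply] at hw ⊢
      rw [Matrix.mulVec_mulVec, ← hS' p, ← Matrix.mulVec_mulVec, hw, Matrix.mulVec_zero]
    rcases hirr _ hinv with h | h
    · exfalso
      have : v ∈ LinearMap.ker (Matrix.toLin' S') := by
        rw [LinearMap.mem_ker, Matrix.toLin'_apply]
        exact hSv
      rw [h] at this
      exact hv.2 (by simpa using this)
    · apply matrix_eq_zero_of_mulVec
      intro w
      have : w ∈ LinearMap.ker (Matrix.toLin' S') := by rw [h]; trivial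
      rw [LinearMap.mem_ker, Matrix.toLin'_apply] at this
      exact this
  have hTμ : Tav = μ • (1 : Matrix (Fin m) (Fin m) ℂ) := by
    have := sub_eq_zero.mp hSzero
    exact this
  have htr : Matrix.trace Tav = (Fintype.card (G × ZMod (n-1)) : ℂ) * Matrix.trace M := by
    rw [hTav, Matrix.trace_sum]
    have : ∀ p : G × ZMod (n-1), Matrix.trace ((Γ p : Matrix (Fin m) (Fin m) ℂ) * M *
        (((Γ p)⁻¹ : Matrix.GeneralLinearGroup (Fin m) ℂ) : Matrix (Fin m) (Fin m) ℂ))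
        = Matrix.trace M := by
      intro p
      rw [Matrix.trace_mul_cycle, coe_inv_mul, Matrix.one_mul]
    rw [Finset.sum_congr rfl (fun p _ => this p), Finset.sum_const, Finset.card_univ,
      nsmul_eq_mul]
  have htrμ : Matrix.trace (μ • (1 : Matrix (Fin m) (Fin m) ℂ)) = μ * m := by
    rw [Matrix.trace_smul, Matrix.trace_one]
    simp [smul_eq_mul]
  have hμval : μ = ((Fintype.card (G × ZMod (n-1)) : ℂ) * Matrix.trace M) / (m : ℂ) := by
    have h1 : μ * m = (Fintype.card (G × ZMod (n-1)) : ℂ) * Matrix.trace M := by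
      rw [← htrμ, ← hTμ, htr]
    have hm' : (m : ℂ) ≠ 0 := Nat.cast_ne_zero.mpr hm
    rw [eq_div_iff hm']
    exact h1
  rw [hTμ, hμval]

end Averaging2

section CharOrth
variable {n : ℕ} {G : Type*} [Finite G] [Fintype G] (P : PolyadicGroup n G) (a : G)

lemma B_val [NeZero (n-1)] {m₁ m₂ : ℕ}
    (Γ₁ : G × ZMod (n-1) → Matrix.GeneralLinearGroup (Fin m₁) ℂ)
    (Γ₂ : G × ZMod (n-1) → Matrix.GeneralLinearGroup (Fin m₂) ℂ) :
    ∑ p : G × ZMod (n-1), Matrix.trace (Γ₁ p : Matrix (Fin m₁) (Fin m₁) ℂ)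
        * Matrix.trace (((Γ₂ p)⁻¹ : Matrix.GeneralLinearGroup (Fin m₂) ℂ) : Matrix (Fin m₂) (Fin m₂) ℂ)
      = ∑ i : Fin m₁, ∑ j : Fin m₂,
          (∑ p : G × ZMod (n-1), (Γ₁ p : Matrix (Fin m₁) (Fin m₁) ℂ)
            * Matrix.single i j (1:ℂ)
            * (((Γ₂ p)⁻¹ : Matrix.GeneralLinearGroup (Fin m₂) ℂ) : Matrix (Fin m₂) (Fin m₂) ℂ)) i j := by
  have hrhs : ∀ (i : Fin m₁) (j : Fin m₂),
      (∑ p : G × ZMod (n-1), (Γ₁ p : Matrix (Fin m₁) (Fin m₁) ℂ)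
        * Matrix.single i j (1:ℂ)
        * (((Γ₂ p)⁻¹ : Matrix.GeneralLinearGroup (Fin m₂) ℂ) : Matrix (Fin m₂) (Fin m₂) ℂ)) i j
      = ∑ p : G × ZMod (n-1), (Γ₁ p : Matrix (Fin m₁) (Fin m₁) ℂ) i i
          * (((Γ₂ p)⁻¹ : Matrix.GeneralLinearGroup (Fin m₂) ℂ) : Matrix (Fin m₂) (Fin m₂) ℂ) j j := by
    intro i j
    rw [Matrix.sum_apply]
    exact Finset.sum_congr rfl fun p _ => sandwich_entry _ _ i i j j
  calc ∑ p : G × ZMod (n-1), Matrix.trace (Γ₁ p : Matrix (Fin m₁) (Fin m₁) ℂ)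
        * Matrix.trace (((Γ₂ p)⁻¹ : Matrix.GeneralLinearGroup (Fin m₂) ℂ) : Matrix (Fin m₂) (Fin m₂) ℂ)
      = ∑ p : G × ZMod (n-1), ∑ i : Fin m₁, ∑ j : Fin m₂,
          (Γ₁ p : Matrix (Fin m₁) (Fin m₁) ℂ) i i
          * (((Γ₂ p)⁻¹ : Matrix.GeneralLinearGroup (Fin m₂) ℂ) : Matrix (Fin m₂) (Fin m₂) ℂ) j j := by
        refine Finset.sum_congr rfl fun p _ => ?_
        exact Fintype.sum_mul_sum _ _
    _ = ∑ i : Fin m₁, ∑ j : Fin m₂, ∑ p : G × ZMod (n-1),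
          (Γ₁ p : Matrix (Fin m₁) (Fin m₁) ℂ) i i
          * (((Γ₂ p)⁻¹ : Matrix.GeneralLinearGroup (Fin m₂) ℂ) : Matrix (Fin m₂) (Fin m₂) ℂ) j j := by
        rw [Finset.sum_comm]
        exact Finset.sum_congr rfl fun i _ => Finset.sum_comm
    _ = _ := Finset.sum_congr rfl fun i _ => Finset.sum_congr rfl fun j _ => (hrhs i j).symm

lemma char_orth [NeZero (n-1)] (hn : 2 ≤ n) {m₁ m₂ : ℕ}
    (Γ₁ : G × ZMod (n-1) → Matrix.GeneralLinearGroup (Fin m₁) ℂ)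
    (Γ₂ : G × ZMod (n-1) → Matrix.GeneralLinearGroup (Fin m₂) ℂ)
    (hmul₁ : ∀ p q, Γ₁ (postMul P a p q) = Γ₁ p * Γ₁ q)
    (hmul₂ : ∀ p q, Γ₂ (postMul P a p q) = Γ₂ p * Γ₂ q)
    (hirr₁ : IsIrredSet (Set.range Γ₁)) (hirr₂ : IsIrredSet (Set.range Γ₂))
    (hne : ¬ RepEquiv ⟨m₁, Γ₁⟩ ⟨m₂, Γ₂⟩) :
    ∑ p : G × ZMod (n-1), Matrix.trace (Γ₁ p : Matrix (Fin m₁) (Fin m₁) ℂ)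
        * Matrix.trace (((Γ₂ p)⁻¹ : Matrix.GeneralLinearGroup (Fin m₂) ℂ) : Matrix (Fin m₂) (Fin m₂) ℂ)
      = 0 := by
  rw [B_val]
  have hzero : ∀ (i : Fin m₁) (j : Fin m₂),
      (∑ p : G × ZMod (n-1), (Γ₁ p : Matrix (Fin m₁) (Fin m₁) ℂ)
        * Matrix.single i j (1:ℂ)
        * (((Γ₂ p)⁻¹ : Matrix.GeneralLinearGroup (Fin m₂) ℂ) : Matrix (Fin m₂) (Fin m₂) ℂ)) = 0 := by
    intro i j
    rcases schur_dichotomy hirr₁ hirr₂ _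
      (fun q => avg_intertwine P a hn Γ₁ Γ₂ hmul₁ hmul₂ (Matrix.single i j (1:ℂ)) q)
      with h | h
    · exact h
    · exact absurd h hne
  rw [Finset.sum_congr rfl (fun i _ => Finset.sum_congr rfl
    (fun j (_ : j ∈ Finset.univ) => by rw [hzero i j]; rfl))]
  exact Finset.sum_eq_zero fun i _ => Finset.sum_eq_zero fun j _ => rfl

lemma char_norm [NeZero (n-1)] (hn : 2 ≤ n) {m : ℕ} (hm : m ≠ 0)
    (Γ : G × ZMod (n-1) → Matrix.GeneralLinearGroup (Fin m) ℂ)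
    (hmul : ∀ p q, Γ (postMul P a p q) = Γ p * Γ q)
    (hirr : IsIrredSet (Set.range Γ)) :
    ∑ p : G × ZMod (n-1), Matrix.trace (Γ p : Matrix (Fin m) (Fin m) ℂ)
        * Matrix.trace (((Γ p)⁻¹ : Matrix.GeneralLinearGroup (Fin m) ℂ) : Matrix (Fin m) (Fin m) ℂ)
      = (Fintype.card (G × ZMod (n-1)) : ℂ) := by
  rw [B_val]
  have hm' : (m : ℂ) ≠ 0 := Nat.cast_ne_zero.mpr hm
  have hval : ∀ i j : Fin m,
      (∑ p : G × ZMod (n-1), (Γ p : Matrix (Fin m) (Fin m) ℂ)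
        * Matrix.single i j (1:ℂ)
        * (((Γ p)⁻¹ : Matrix.GeneralLinearGroup (Fin m) ℂ) : Matrix (Fin m) (Fin m) ℂ)) i j
      = if i = j then (Fintype.card (G × ZMod (n-1)) : ℂ) / m else 0 := by
    intro i j
    rw [avg_self P a hn hm Γ hmul hirr]
    rcases eq_or_ne i j with rfl | hij
    · have htrE : Matrix.trace (Matrix.single i i (1:ℂ)) = 1 := by
        simp [Matrix.trace, Matrix.diag, Matrix.single]
      simp [htrE, Matrix.smul_apply, Matrix.one_apply]
    · simp [Matrix.smul_apply, Matrix.one_apply, hij]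
  rw [Finset.sum_congr rfl (fun i _ => Finset.sum_congr rfl (fun j _ => hval i j))]
  simp only [Finset.sum_ite_eq, Finset.mem_univ, if_true]
  rw [Finset.sum_const, Finset.card_univ, Fintype.card_fin, nsmul_eq_mul]
  field_simp

end CharOrth

section Classes
variable {n : ℕ} {G : Type*}

lemma gl0_subsingleton : ∀ u v : Matrix.GeneralLinearGroup (Fin 0) ℂ, u = v := by
  intro u v
  apply Units.ext
  ext i
  exact i.elim0

/-- the class of a representation under a property `Pr` -/
def clsOf {X : Type*} (Pr : (Σ m : ℕ, X → Matrix.GeneralLinearGroup (Fin m) ℂ) → Prop)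
    (Λ : Σ m : ℕ, X → Matrix.GeneralLinearGroup (Fin m) ℂ) :
    Set (Σ m : ℕ, X → Matrix.GeneralLinearGroup (Fin m) ℂ) :=
  {Λ' | Pr Λ' ∧ RepEquiv Λ Λ'}

lemma mem_clsOf_self {X : Type*} {Pr} {Λ : Σ m : ℕ, X → Matrix.GeneralLinearGroup (Fin m) ℂ}
    (h : Pr Λ) : Λ ∈ clsOf Pr Λ := ⟨h, RepEquiv.refl Λ⟩

lemma clsOf_eq_of_equiv {X : Type*} {Pr} {Λ Λ' : Σ m : ℕ, X → Matrix.GeneralLinearGroup (Fin m) ℂ}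
    (h : RepEquiv Λ Λ') : clsOf Pr Λ = clsOf Pr Λ' := by
  ext Λ''
  exact ⟨fun ⟨hp, he⟩ => ⟨hp, h.symm.trans he⟩, fun ⟨hp, he⟩ => ⟨hp, h.trans he⟩⟩

lemma equiv_of_clsOf_eq {X : Type*} {Pr} {Λ Λ' : Σ m : ℕ, X → Matrix.GeneralLinearGroup (Fin m) ℂ}
    (h' : Pr Λ') (h : clsOf Pr Λ = clsOf Pr Λ') : RepEquiv Λ Λ' := by
  have : Λ' ∈ clsOf Pr Λ := by rw [h]; exact mem_clsOf_self h'
  exact this.2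

/-- pairing functional -/
noncomputable def pairL {T : Type*} [Fintype T] (c : T → ℂ) : (T → ℂ) →ₗ[ℂ] ℂ where
  toFun := fun ψ => ∑ p, ψ p * c p
  map_add' := by intros ψ φ; simp [add_mul, Finset.sum_add_distrib]
  map_smul' := by intros r ψ; simp [Finset.mul_sum, smul_eq_mul, mul_assoc]

end Classes

section Final
variable {n : ℕ} {G : Type*}

lemma classes_finite [Finite G] (hn : 2 ≤ n) (P : PolyadicGroup n G) (a : G) :
    Set.Finite {C | ∃ Λ : Σ m : ℕ, G → Matrix.GeneralLinearGroup (Fin m) ℂ,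
      (IsNaryRep P Λ.2 ∧ IsIrredSet (Set.range Λ.2)) ∧
      C = {Λ' | (IsNaryRep P Λ'.2 ∧ IsIrredSet (Set.range Λ'.2)) ∧ RepEquiv Λ Λ'}} := by
  classical
  haveI : NeZero (n-1) := ⟨by omega⟩
  letI : Fintype G := Fintype.ofFinite G
  set NPr : (Σ m : ℕ, G → Matrix.GeneralLinearGroup (Fin m) ℂ) → Prop :=
    fun Λ => IsNaryRep P Λ.2 ∧ IsIrredSet (Set.range Λ.2) with hNPr
  have hsub : {C | ∃ Λ : Σ m : ℕ, G → Matrix.GeneralLinearGroup (Fin m) ℂ,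
      (IsNaryRep P Λ.2 ∧ IsIrredSet (Set.range Λ.2)) ∧
      C = {Λ' | (IsNaryRep P Λ'.2 ∧ IsIrredSet (Set.range Λ'.2)) ∧ RepEquiv Λ Λ'}}
      ⊆ {C | ∃ Λ, (NPr Λ ∧ Λ.1 = 0) ∧ C = clsOf NPr Λ}
        ∪ {C | ∃ Λ, (NPr Λ ∧ Λ.1 ≠ 0) ∧ C = clsOf NPr Λ} := by
    rintro C ⟨Λ, hN, hC⟩
    rcases eq_or_ne Λ.1 0 with h0 | h0
    · exact Or.inl ⟨Λ, ⟨hN, h0⟩, hC⟩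
    · exact Or.inr ⟨Λ, ⟨hN, h0⟩, hC⟩
  refine Set.Finite.subset (Set.Finite.union ?_ ?_) hsub
  · -- degree-0 classes: subsingleton
    apply Set.Subsingleton.finite
    rintro C ⟨Λ, ⟨hN, h0⟩, hC⟩ C' ⟨Λ', ⟨hN', h0'⟩, hC'⟩
    obtain ⟨m, f⟩ := Λ
    obtain ⟨m', f'⟩ := Λ'
    subst hC hC'
    dsimp only at h0 h0'
    subst h0 h0'
    have : RepEquiv ⟨0, f⟩ ⟨0, f'⟩ := ⟨rfl, 1, fun x => gl0_subsingleton _ _⟩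
    exact clsOf_eq_of_equiv this
  · -- positive-degree classes
    set A1 := {C | ∃ Λ, (NPr Λ ∧ Λ.1 ≠ 0) ∧ C = clsOf NPr Λ} with hA1
    suffices h : Finite ↥A1 by exact A1.toFinite
    have hch : ∀ C : ↥A1, ∃ Λ, (NPr Λ ∧ Λ.1 ≠ 0) ∧ (C : Set _) = clsOf NPr Λ := fun C => C.2
    choose rep hrep hcls using hch
    set Φ : ↥A1 → ((G × ZMod (n-1)) → ℂ) := fun C => fun p =>
      Matrix.trace ((starRep n a (rep C).2 p : Matrix (Fin (rep C).1) (Fin (rep C).1) ℂ))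
      with hΦ
    have hmulC : ∀ C : ↥A1, ∀ p q, starRep n a (rep C).2 (postMul P a p q)
        = starRep n a (rep C).2 p * starRep n a (rep C).2 q :=
      fun C p q => star_mul P (hrep C).1.1 hn a p q
    have hirrC : ∀ C : ↥A1, IsIrredSet (Set.range (starRep n a (rep C).2)) :=
      fun C => irred_star a hn (hrep C).1.2
    have hcard0 : (Fintype.card (G × ZMod (n-1)) : ℂ) ≠ 0 := by
      haveI : Nonempty G := ⟨a⟩
      exact Nat.cast_ne_zero.mpr Fintype.card_ne_zero
    have hli : LinearIndependent ℂ Φ := by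
      rw [linearIndependent_iff']
      intro t g hsum C₀ hC₀
      set c : (G × ZMod (n-1)) → ℂ := fun p =>
        Matrix.trace ((((starRep n a (rep C₀).2 p)⁻¹ :
          Matrix.GeneralLinearGroup (Fin (rep C₀).1) ℂ) :
          Matrix (Fin (rep C₀).1) (Fin (rep C₀).1) ℂ)) with hc
      have hL := congrArg (pairL c) hsum
      rw [map_sum, map_zero] at hL
      simp only [map_smul, smul_eq_mul] at hL
      have hBval : ∀ C ∈ t, g C * pairL c (Φ C)
          = if C = C₀ then g C * (Fintype.card (G × ZMod (n-1)) : ℂ) else 0 := by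
        intro C _
        rcases eq_or_ne C C₀ with rfl | hne
        · rw [if_pos rfl]
          congr 1
          exact char_norm P a hn (hrep C).2 (starRep n a (rep C).2) (hmulC C) (hirrC C)
        · rw [if_neg hne]
          have hneq : ¬ RepEquiv ⟨(rep C).1, starRep n a (rep C).2⟩
              ⟨(rep C₀).1, starRep n a (rep C₀).2⟩ := by
            intro hre
            have hre' := repEquiv_of_star a hn (Λ := rep C) (Λ' := rep C₀) hre
            have hceq : clsOf NPr (rep C) = clsOf NPr (rep C₀) := clsOf_eq_of_equiv hre'
            apply hne
            apply Subtype.ext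
            rw [hcls C, hcls C₀, hceq]
          have := char_orth P a hn (starRep n a (rep C).2) (starRep n a (rep C₀).2)
            (hmulC C) (hmulC C₀) (hirrC C) (hirrC C₀) hneq
          rw [show pairL c (Φ C) = (0:ℂ) from this, mul_zero]
      rw [Finset.sum_congr rfl hBval, Finset.sum_ite_eq' t C₀
        (fun C => g C * (Fintype.card (G × ZMod (n-1)) : ℂ)), if_pos hC₀] at hL
      exact (mul_eq_zero.mp hL).resolve_right hcard0
    exact hli.finite

end Final

section Main
variable {n : ℕ} {G : Type*}

def NPred (P : PolyadicGroup n G) (Λ : Σ m : ℕ, G → Matrix.GeneralLinearGroup (Fin m) ℂ) : Prop :=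
  IsNaryRep P Λ.2 ∧ IsIrredSet (Set.range Λ.2)

def PPred (P : PolyadicGroup n G) (a : G)
    (Γ : Σ m : ℕ, (G × ZMod (n-1)) → Matrix.GeneralLinearGroup (Fin m) ℂ) : Prop :=
  (∀ p q, Γ.2 (postMul P a p q) = Γ.2 p * Γ.2 q) ∧ IsIrredSet (Set.range Γ.2)

lemma star_PPred (hn : 2 ≤ n) (P : PolyadicGroup n G) (a : G)
    {Λ : Σ m : ℕ, G → Matrix.GeneralLinearGroup (Fin m) ℂ} (h : NPred P Λ) :
    PPred P a ⟨Λ.1, starRep n a Λ.2⟩ :=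
  ⟨fun p q => star_mul P h.1 hn a p q, irred_star a hn h.2⟩

lemma F_cls_eq (hn : 2 ≤ n) (P : PolyadicGroup n G) (a : G)
    {Λ : Σ m : ℕ, G → Matrix.GeneralLinearGroup (Fin m) ℂ} (h : NPred P Λ) :
    {Γ' | PPred P a Γ' ∧ ∃ Λ' ∈ clsOf (NPred P) Λ, RepEquiv ⟨Λ'.1, starRep n a Λ'.2⟩ Γ'}
      = clsOf (PPred P a) ⟨Λ.1, starRep n a Λ.2⟩ := by
  ext Γ'
  constructor
  · rintro ⟨hp, Λ', ⟨hN', heq⟩, hst⟩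
    exact ⟨hp, (repEquiv_star a hn heq).trans hst⟩
  · rintro ⟨hp, hst⟩
    exact ⟨hp, Λ, mem_clsOf_self h, hst⟩

end Main

/-- There is a bijection, induced by `Λ ↦ Λ*`, between equivalence classes of
irreducible representations of a finite n-ary group `(G,f)` and of its Post
cover `G*_a`; in particular there are only finitely many classes. -/
theorem irr_classes_bijection {n : ℕ} {G : Type*} [Finite G] (hn : 2 ≤ n)
    (P : PolyadicGroup n G) (a : G) :
    ∃ F : Set (Σ m : ℕ, G → Matrix.GeneralLinearGroup (Fin m) ℂ) →
          Set (Σ m : ℕ, (G × ZMod (n - 1)) → Matrix.GeneralLinearGroup (Fin m) ℂ),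
      Set.BijOn F
        {C | ∃ Λ, (IsNaryRep P Λ.2 ∧ IsIrredSet (Set.range Λ.2)) ∧
          C = {Λ' | (IsNaryRep P Λ'.2 ∧ IsIrredSet (Set.range Λ'.2)) ∧ RepEquiv Λ Λ'}}
        {D | ∃ Γ, ((∀ p q, Γ.2 (postMul P a p q) = Γ.2 p * Γ.2 q) ∧
            IsIrredSet (Set.range Γ.2)) ∧
          D = {Γ' | ((∀ p q, Γ'.2 (postMul P a p q) = Γ'.2 p * Γ'.2 q) ∧
            IsIrredSet (Set.range Γ'.2)) ∧ RepEquiv Γ Γ'}} ∧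
      (∀ Λ : Σ m : ℕ, G → Matrix.GeneralLinearGroup (Fin m) ℂ,
        IsNaryRep P Λ.2 → IsIrredSet (Set.range Λ.2) →
        F {Λ' | (IsNaryRep P Λ'.2 ∧ IsIrredSet (Set.range Λ'.2)) ∧ RepEquiv Λ Λ'}
          = {Γ' | ((∀ p q, Γ'.2 (postMul P a p q) = Γ'.2 p * Γ'.2 q) ∧
              IsIrredSet (Set.range Γ'.2)) ∧
              RepEquiv ⟨Λ.1, starRep n a Λ.2⟩ Γ'}) ∧
      Set.Finite
        {C | ∃ Λ, (IsNaryRep P Λ.2 ∧ IsIrredSet (Set.range Λ.2)) ∧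
          C = {Λ' | (IsNaryRep P Λ'.2 ∧ IsIrredSet (Set.range Λ'.2)) ∧ RepEquiv Λ Λ'}} := by

  classical
  haveI : NeZero (n-1) := ⟨by omega⟩
  refine ⟨fun C => {Γ' | PPred P a Γ' ∧ ∃ Λ' ∈ C, RepEquiv ⟨Λ'.1, starRep n a Λ'.2⟩ Γ'},
    ⟨?_, ?_, ?_⟩, ?_, classes_finite hn P a⟩
  · -- MapsTo
    rintro C ⟨Λ, hN, rfl⟩
    exact ⟨⟨Λ.1, starRep n a Λ.2⟩, star_PPred hn P a hN, F_cls_eq hn P a hN⟩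
  · -- InjOn
    rintro C ⟨Λ, hN, rfl⟩ C' ⟨Λ', hN', rfl⟩ hFeq
    have h1 : clsOf (PPred P a) ⟨Λ.1, starRep n a Λ.2⟩
        = clsOf (PPred P a) ⟨Λ'.1, starRep n a Λ'.2⟩ :=
      (F_cls_eq hn P a hN).symm.trans (hFeq.trans (F_cls_eq hn P a hN'))
    have h2 := equiv_of_clsOf_eq (star_PPred hn P a hN') h1
    have h3 : RepEquiv Λ Λ' := repEquiv_of_star a hn h2
    exact clsOf_eq_of_equiv h3
  · -- SurjOn
    rintro D ⟨Γ, hP, rfl⟩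
    obtain ⟨hNary, hstarEq⟩ := post_to_nary P a hn hP.1
    set Λ₀ : Σ m : ℕ, G → Matrix.GeneralLinearGroup (Fin m) ℂ :=
      ⟨Γ.1, fun x => Γ.2 (x, 0)⟩ with hΛ₀
    have hirr₀ : IsIrredSet (Set.range Λ₀.2) := by
      intro W hW
      refine hP.2 W ?_
      rintro g ⟨p, rfl⟩ v hv
      have hg : Γ.2 p = Λ₀.2 p.1 * (Λ₀.2 a) ^ p.2.val := by
        rw [← hstarEq]
        rfl
      rw [hg]
      exact pow_invariant a W hW p.1 p.2.val v hv
    have hN₀ : NPred P Λ₀ := ⟨hNary, hirr₀⟩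
    refine ⟨clsOf (NPred P) Λ₀, ⟨Λ₀, hN₀, rfl⟩, ?_⟩
    have hstS : (⟨Λ₀.1, starRep n a Λ₀.2⟩ : Σ m : ℕ,
        (G × ZMod (n-1)) → Matrix.GeneralLinearGroup (Fin m) ℂ) = Γ := by
      have := congrArg (fun f => (⟨Γ.1, f⟩ : Σ m : ℕ,
        (G × ZMod (n-1)) → Matrix.GeneralLinearGroup (Fin m) ℂ)) hstarEq
      exact this
    have := F_cls_eq hn P a hN₀
    rw [hstS] at this
    exact this
  · -- formula
    intro Λ hN hI
    exact F_cls_eq hn P a ⟨hN, hI⟩
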